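/- The pair (E₁₁+E₂₃, E₂₂) of 3×3 complex matrices (the representative of the orbit O₉ of (E₆,α₄)) lies in the closure (standard topology) of the GL₂(ℂ)×GL₃(ℂ)×GL₃(ℂ)-orbit of the pair (E₁₁+E₂₃, E₂₂+E₁₃) (the representative of the orbit O₁₁). This is the adjacency between orbits 9 and 11 in the degeneration order, which is missing in Parfenov's table. -/

import Mathlib

open Matrix

/-- The 3×3 complex matrix unit `E_{ij}`. -/
def Emat (i j : Fin 3) : Matrix (Fin 3) (Fin 3) ℂ := single i j 1

/-- Two pairs of 3×3 complex matrices are equivalent under `GL₂(ℂ) × GL₃(ℂ) × GL₃(ℂ)`,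
acting by `((a b; c d), P, Q) · (A, B) = (P(aA+bB)Qᵀ, P(cA+dB)Qᵀ)`. -/
def TEquiv (p q : Matrix (Fin 3) (Fin 3) ℂ × Matrix (Fin 3) (Fin 3) ℂ) : Prop :=
  ∃ (g : GL (Fin 2) ℂ) (P Q : GL (Fin 3) ℂ),
    q.1 = P.val * (g.val 0 0 • p.1 + g.val 0 1 • p.2) * Q.valᵀ ∧
    q.2 = P.val * (g.val 1 0 • p.1 + g.val 1 1 • p.2) * Q.valᵀ

/-- The eighteen normal forms of pairs of 3×3 complex matrices under
`GL₂(ℂ) × GL₃(ℂ) × GL₃(ℂ)` (the orbit representatives of `(E₆, α₄)`). -/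
def tensorForms : Fin 18 → Matrix (Fin 3) (Fin 3) ℂ × Matrix (Fin 3) (Fin 3) ℂ :=
  ![(0, 0),
    (Emat 0 0, 0),
    (Emat 0 0, Emat 1 0),
    (Emat 0 0, Emat 0 1),
    (Emat 0 0 + Emat 1 1, 0),
    (Emat 0 0 + Emat 1 1, Emat 0 1),
    (Emat 0 0 + Emat 1 1 + Emat 2 2, 0),
    (Emat 0 0, Emat 1 1),
    (Emat 0 0 + Emat 2 1, Emat 1 1),
    (Emat 0 0 + Emat 1 2, Emat 1 1),
    (Emat 0 0 + Emat 2 1, Emat 1 1 + Emat 2 0),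
    (Emat 0 0 + Emat 1 2, Emat 1 1 + Emat 0 2),
    (Emat 0 0 + Emat 1 2 + Emat 2 1, Emat 1 1),
    (Emat 0 0 + Emat 1 2, Emat 1 1 + Emat 2 0),
    (Emat 0 0 + Emat 2 2, Emat 1 1),
    (Emat 0 0 + Emat 1 2 + Emat 2 1, Emat 1 1 + Emat 2 0),
    (Emat 0 0 + Emat 2 2, Emat 1 1 + Emat 0 2),
    (Emat 0 0 + Emat 1 1 + Emat 2 2, Emat 0 0 - Emat 1 1)]

def Dmat (t : ℂ) : Matrix (Fin 3) (Fin 3) ℂ := Matrix.diagonal ![t, 1, 1]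

lemma Dmat_mul (t s : ℂ) : Dmat t * Dmat s = Dmat (t * s) := by
  ext i j
  fin_cases i <;> fin_cases j <;>
    simp [Dmat, Matrix.diagonal, Matrix.mul_apply, Fin.sum_univ_three]

lemma Dmat_one : Dmat 1 = 1 := by
  ext i j
  fin_cases i <;> fin_cases j <;> simp [Dmat, Matrix.diagonal, Matrix.one_apply]

noncomputable def Dgl (t : ℂ) (ht : t ≠ 0) : GL (Fin 3) ℂ :=
  ⟨Dmat t, Dmat t⁻¹, by rw [Dmat_mul, mul_inv_cancel₀ ht, Dmat_one],
    by rw [Dmat_mul, inv_mul_cancel₀ ht, Dmat_one]⟩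

lemma key1 (t : ℂ) (ht : t ≠ 0) :
    Dmat t * (Emat 0 0 + Emat 1 2) * (Dmat t⁻¹)ᵀ = Emat 0 0 + Emat 1 2 := by
  ext i j
  fin_cases i <;> fin_cases j <;>
    simp [Dmat, Emat, Matrix.mul_apply, Fin.sum_univ_three, Matrix.diagonal,
      Matrix.single, Matrix.transpose_apply, mul_inv_cancel₀ ht]

lemma key2 (t : ℂ) :
    Dmat t * (Emat 1 1 + Emat 0 2) * (Dmat t⁻¹)ᵀ = Emat 1 1 + t • Emat 0 2 := by
  ext i j
  fin_cases i <;> fin_cases j <;>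
    simp [Dmat, Emat, Matrix.mul_apply, Fin.sum_univ_three, Matrix.diagonal,
      Matrix.single, Matrix.transpose_apply]

lemma keyT : Filter.Tendsto
      (fun t : ℂ => ((Emat 0 0 + Emat 1 2, Emat 1 1 + t • Emat 0 2) :
        Matrix (Fin 3) (Fin 3) ℂ × Matrix (Fin 3) (Fin 3) ℂ))
      (nhdsWithin 0 {0}ᶜ)
      (nhds (Emat 0 0 + Emat 1 2, Emat 1 1)) := by
  have hc : Continuous (fun t : ℂ => ((Emat 0 0 + Emat 1 2, Emat 1 1 + t • Emat 0 2) :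
      Matrix (Fin 3) (Fin 3) ℂ × Matrix (Fin 3) (Fin 3) ℂ)) := by
    fun_prop
  simpa using (hc.tendsto 0).mono_left nhdsWithin_le_nhds

/-- The pair `(E₁₁ + E₂₃, E₂₂)` (representative of the orbit `O₉` of `(E₆, α₄)`) lies in the
closure (standard topology) of the `GL₂(ℂ) × GL₃(ℂ) × GL₃(ℂ)`-orbit of
`(E₁₁ + E₂₃, E₂₂ + E₁₃)` (the representative of the orbit `O₁₁`): the adjacency between
orbits 9 and 11 missing in Parfenov's table. -/
theorem orbit9_in_closure_orbit11 :
    ((Emat 0 0 + Emat 1 2, Emat 1 1) : Matrix (Fin 3) (Fin 3) ℂ × Matrix (Fin 3) (Fin 3) ℂ) ∈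
      closure {q : Matrix (Fin 3) (Fin 3) ℂ × Matrix (Fin 3) (Fin 3) ℂ |
        TEquiv (Emat 0 0 + Emat 1 2, Emat 1 1 + Emat 0 2) q} := by
  refine mem_closure_of_tendsto keyT ?_
  filter_upwards [self_mem_nhdsWithin] with t ht
  have ht' : t ≠ 0 := ht
  have hti : t⁻¹ ≠ 0 := inv_ne_zero ht'
  refine ⟨1, Dgl t ht', Dgl t⁻¹ hti, ?_, ?_⟩
  · show _ = Dmat t * _ * (Dmat t⁻¹)ᵀ
    rw [show ((1 : GL (Fin 2) ℂ) : Matrix (Fin 2) (Fin 2) ℂ) = 1 from rfl]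
    simp only [Matrix.one_apply_eq, Matrix.one_apply_ne (by decide : (0:Fin 2) ≠ 1),
      one_smul, zero_smul, add_zero]
    exact (key1 t ht').symm
  · show _ = Dmat t * _ * (Dmat t⁻¹)ᵀ
    rw [show ((1 : GL (Fin 2) ℂ) : Matrix (Fin 2) (Fin 2) ℂ) = 1 from rfl]
    simp only [Matrix.one_apply_eq, Matrix.one_apply_ne (by decide : (1:Fin 2) ≠ 0),
      one_smul, zero_smul, zero_add]
    exact (key2 t).symm
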